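/- arXiv:0903.2555 — 2 statements merged into one kernel-verified Lean document; each statement's English description precedes it below -/
import Mathlib

section
/- Let X, Y be subsets of the positive integers and n ≥ 1 an integer with n+1 ∈ X ∩ Y. Then for all k ≥ 0, A_{n+1,k}^{X,Y} = (x_n + y_n − (k−1)) · A_{n,k−1}^{X,Y} + (n+1 − (x_n + y_n − k)) · A_{n,k}^{X,Y}, where the term with A_{n,k−1}^{X,Y} is omitted when k = 0. -/
open Finset Equiv
open scoped Classical

/-- `cnt X n` is `|X ∩ [n]|` where `[n] = {1, ..., n}`. -/
noncomputable def cnt (X : Set ℕ) (n : ℕ) : ℕ := (X ∩ Set.Icc 1 n).ncard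

/-- `adj_{X,Y}(σ)`: number of `i` with `σ_i ∈ X` and `σ_{i+1} ∈ Y`
(positions and values of `Fin n` are identified with `{1, ..., n}` via `i ↦ i + 1`). -/
noncomputable def adjCount (X Y : Set ℕ) (n : ℕ) (σ : Equiv.Perm (Fin n)) : ℕ :=
  {i : Fin n | ∃ h : (i : ℕ) + 1 < n,
    ((σ i : ℕ) + 1) ∈ X ∧ ((σ ⟨(i : ℕ) + 1, h⟩ : ℕ) + 1) ∈ Y}.ncard

/-- `A_{n,s}^{X,Y}`: the number of permutations of `[n]` with exactly `s`
`(X,Y)`-adjacencies. -/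
noncomputable def A (X Y : Set ℕ) (n s : ℕ) : ℕ :=
  Nat.card {σ : Equiv.Perm (Fin n) | adjCount X Y n σ = s}

lemma A_eq (X Y : Set ℕ) (n s : ℕ) :
    A X Y n s = ((univ : Finset (Equiv.Perm (Fin n))).filter
      (fun σ => adjCount X Y n σ = s)).card := by
  rw [A, Nat.card_coe_set_eq, Set.ncard_eq_toFinset_card', Set.toFinset_setOf]

lemma fin_card_filter_val (m : ℕ) (R : ℕ → Prop) [DecidablePred R]
    [DecidablePred fun p : Fin m => R (p : ℕ)] :
    (Finset.filter (fun p : Fin m => R (p : ℕ)) Finset.univ).card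
      = ((range m).filter R).card := by
  refine Finset.card_bij (fun (p : Fin m) _ => (p : ℕ)) ?_ ?_ ?_
  · intro p hp
    simp only [mem_filter, mem_univ, true_and, mem_range] at hp ⊢
    exact ⟨p.isLt, hp⟩
  · intro a _ b _ hab
    exact Fin.ext hab
  · intro q hq
    simp only [mem_filter, mem_range] at hq
    exact ⟨⟨q, hq.1⟩, by simp only [mem_filter, mem_univ, true_and]; exact hq.2, rfl⟩
noncomputable def vmap (n : ℕ) (σ : Equiv.Perm (Fin n)) : ℕ → ℕ :=
  fun i => if h : i < n then (σ ⟨i, h⟩ : ℕ) + 1 else 0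

lemma vmap_lt (n : ℕ) (σ : Equiv.Perm (Fin n)) (i : ℕ) (h : i < n) :
    vmap n σ i = (σ ⟨i, h⟩ : ℕ) + 1 := dif_pos h

lemma vmap_ge (n : ℕ) (σ : Equiv.Perm (Fin n)) (i : ℕ) (h : n ≤ i) :
    vmap n σ i = 0 := dif_neg (by omega)

noncomputable def acount (X Y : Set ℕ) (n : ℕ) (f : ℕ → ℕ) : ℕ :=
  ((range n).filter (fun i => f i ∈ X ∧ f (i+1) ∈ Y)).card

lemma adjCount_eq (X Y : Set ℕ) (hY : 0 ∉ Y) (n : ℕ) (σ : Equiv.Perm (Fin n)) :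
    adjCount X Y n σ = acount X Y n (vmap n σ) := by
  rw [adjCount, Set.ncard_eq_toFinset_card', Set.toFinset_setOf, acount]
  refine Finset.card_bij (fun i _ => (i : ℕ)) ?_ ?_ ?_
  · rintro i hi
    simp only [mem_filter, mem_univ, true_and] at hi ⊢
    obtain ⟨h, h1, h2⟩ := hi
    refine ⟨mem_range.2 i.isLt, ?_, ?_⟩
    · rwa [vmap_lt n σ _ i.isLt]
    · rwa [vmap_lt n σ _ h]
  · intro a _ b _ hab; exact Fin.ext hab
  · rintro j hj
    simp only [mem_filter, mem_range] at hj
    obtain ⟨hjn, h1, h2⟩ := hj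
    have hj1 : j + 1 < n := by
      by_contra hc
      rw [vmap_ge n σ _ (by omega)] at h2; exact hY h2
    refine ⟨⟨j, hjn⟩, ?_, rfl⟩
    simp only [mem_filter, mem_univ, true_and]
    exact ⟨hj1, by rwa [vmap_lt n σ _ hjn] at h1, by rwa [vmap_lt n σ _ hj1] at h2⟩

def ins (n : ℕ) (σ : Equiv.Perm (Fin n)) (p : Fin (n+1)) : Equiv.Perm (Fin (n+1)) :=
  (finSuccEquiv' p).trans ((Equiv.optionCongr σ).trans (finSuccEquiv' (Fin.last n)).symm)
lemma ins_at (n : ℕ) (σ : Equiv.Perm (Fin n)) (p : Fin (n+1)) :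
    ins n σ p p = Fin.last n := by
  simp [ins, finSuccEquiv'_at, finSuccEquiv'_symm_none]
lemma ins_lt (n : ℕ) (σ : Equiv.Perm (Fin n)) (p : Fin (n+1)) (i : ℕ) (hi : i < n)
    (hip : i < (p : ℕ)) :
    ins n σ p ⟨i, by omega⟩ = Fin.castSucc (σ ⟨i, hi⟩) := by
  have h1 : (⟨i, by omega⟩ : Fin (n+1)) = Fin.castSucc ⟨i, hi⟩ := rfl
  simp only [ins, Equiv.trans_apply, h1]
  rw [finSuccEquiv'_below (by simpa [Fin.lt_def] using hip)]
  simp only [Equiv.optionCongr_apply, Option.map_some]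
  exact finSuccEquiv'_symm_some_below (Fin.castSucc_lt_last _)
lemma ins_gt (n : ℕ) (σ : Equiv.Perm (Fin n)) (p : Fin (n+1)) (i : ℕ) (hi : i ≤ n)
    (hip : (p : ℕ) < i) :
    ins n σ p ⟨i, by omega⟩ = Fin.castSucc (σ ⟨i - 1, by omega⟩) := by
  have h1 : (⟨i, by omega⟩ : Fin (n+1)) = Fin.succ ⟨i - 1, by omega⟩ := by
    ext; simp; omega
  simp only [ins, Equiv.trans_apply, h1]
  rw [finSuccEquiv'_above (by simp [Fin.le_def]; omega)]
  simp only [Equiv.optionCongr_apply, Option.map_some]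
  exact finSuccEquiv'_symm_some_below (Fin.castSucc_lt_last _)

lemma vmap_ins (n : ℕ) (σ : Equiv.Perm (Fin n)) (p : Fin (n+1)) (i : ℕ) :
    vmap (n+1) (ins n σ p) i =
      if i < (p : ℕ) then vmap n σ i
      else if i = (p : ℕ) then n + 1
      else vmap n σ (i - 1) := by
  rcases lt_trichotomy i (p : ℕ) with hip | hip | hip
  · have hi : i < n := by have := p.isLt; omega
    rw [if_pos hip, vmap_lt (n+1) _ i (by omega), vmap_lt n σ i hi]
    have := ins_lt n σ p i hi hip
    rw [this]; simp
  · subst hip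
    rw [if_neg (by omega), if_pos rfl]
    rw [vmap_lt (n+1) _ _ p.isLt]
    have : (⟨(p:ℕ), p.isLt⟩ : Fin (n+1)) = p := rfl
    rw [this, ins_at]; simp
  · rw [if_neg (by omega), if_neg (by omega)]
    by_cases hi : i ≤ n
    · rw [vmap_lt (n+1) _ i (by omega), vmap_lt n σ (i-1) (by omega)]
      have := ins_gt n σ p i hi hip
      rw [this]; simp
    · rw [vmap_ge (n+1) _ i (by omega), vmap_ge n σ (i-1) (by omega)]

lemma ins_injective (n : ℕ) : Function.Injective (fun x : Equiv.Perm (Fin n) × Fin (n+1) => ins n x.1 x.2) := by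
  rintro ⟨σ, p⟩ ⟨σ', p'⟩ hh
  simp only at hh
  have hp : p = p' := by
    by_contra hne
    have h1 : ins n σ p p' = Fin.last n := by rw [hh, ins_at]
    have h2 : (p' : ℕ) ≠ (p : ℕ) := fun hc => hne (Fin.ext hc).symm
    rcases lt_or_gt_of_ne h2 with hlt | hgt
    · have := ins_lt n σ p (p' : ℕ) (by have := p.isLt; omega) hlt
      rw [show (⟨(p':ℕ), _⟩ : Fin (n+1)) = p' from rfl] at this
      rw [this] at h1
      exact absurd h1 (Fin.castSucc_lt_last _).ne
    · have := ins_gt n σ p (p' : ℕ) (by have := p'.isLt; omega) hgt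
      rw [show (⟨(p':ℕ), _⟩ : Fin (n+1)) = p' from rfl] at this
      rw [this] at h1
      exact absurd h1 (Fin.castSucc_lt_last _).ne
  subst hp
  have key : ∀ τ : Equiv.Perm (Fin n),
      ((finSuccEquiv' p).symm.trans (ins n τ p)).trans (finSuccEquiv' (Fin.last n)) =
        Equiv.optionCongr τ := by
    intro τ; ext x; simp [ins]
  have hσ : Equiv.optionCongr σ = Equiv.optionCongr σ' := by
    rw [← key σ, ← key σ', hh]
  refine Prod.ext ?_ rfl
  ext j
  have := congrArg (fun e : Equiv.Perm (Option (Fin n)) => e (some j)) hσ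
  simp only [Equiv.optionCongr_apply, Option.map_some] at this
  rw [Option.some_inj.1 this]

lemma ins_bijective (n : ℕ) : Function.Bijective (fun x : Equiv.Perm (Fin n) × Fin (n+1) => ins n x.1 x.2) := by
  rw [Fintype.bijective_iff_injective_and_card]
  refine ⟨ins_injective n, ?_⟩
  simp [Fintype.card_perm, Nat.factorial_succ, mul_comm]

lemma acount_eq_sum (X Y : Set ℕ) (n : ℕ) (f : ℕ → ℕ) :
    acount X Y n f = ∑ i ∈ range n, (if f i ∈ X ∧ f (i+1) ∈ Y then 1 else 0) := by
  rw [acount, Finset.card_filter]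

lemma acount_insert (X Y : Set ℕ) (n p : ℕ) (hp : p ≤ n) (f : ℕ → ℕ)
    (hX2 : n+1 ∈ X) (hY2 : n+1 ∈ Y) (g : ℕ → ℕ)
    (hg : ∀ i, g i = if i < p then f i else if i = p then n+1 else f (i-1)) :
    acount X Y (n+1) g + (if 1 ≤ p ∧ f (p-1) ∈ X ∧ f p ∈ Y then 1 else 0)
      = acount X Y n f + ((if 1 ≤ p ∧ f (p-1) ∈ X then 1 else 0)
          + (if f p ∈ Y then 1 else 0)) := by
  set c : (ℕ → ℕ) → ℕ → ℕ := fun h i => if h i ∈ X ∧ h (i+1) ∈ Y then 1 else 0 with hc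
  have hgsplit : ∑ i ∈ range (n+1), c g i
      = ∑ i ∈ range p, c g i + (c g p + ∑ i ∈ Ico (p+1) (n+1), c g i) := by
    rw [range_eq_Ico, ← Finset.sum_Ico_consecutive (fun i => c g i) (Nat.zero_le p)
      (show p ≤ n+1 by omega), Finset.sum_eq_sum_Ico_succ_bot (show p < n+1 by omega),
      ← range_eq_Ico]
  have hfsplit : ∑ i ∈ range n, c f i
      = ∑ i ∈ range p, c f i + ∑ i ∈ Ico p n, c f i := by
    rw [range_eq_Ico, ← Finset.sum_Ico_consecutive (fun i => c f i) (Nat.zero_le p) hp,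
      ← range_eq_Ico]
  have htail : ∑ i ∈ Ico (p+1) (n+1), c g i = ∑ i ∈ Ico p n, c f i := by
    rw [Finset.sum_Ico_eq_sum_range, Finset.sum_Ico_eq_sum_range]
    have hlen : n + 1 - (p+1) = n - p := by omega
    rw [hlen]
    refine Finset.sum_congr rfl fun i _ => ?_
    have e1 : g (p + 1 + i) = f (p + i) := by
      rw [hg]; rw [if_neg (by omega), if_neg (by omega)]; congr 1 <;> omega
    have e2 : g (p + 1 + i + 1) = f (p + i + 1) := by
      rw [hg]; rw [if_neg (by omega), if_neg (by omega)]; congr 1 <;> omega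
    simp only [hc, e1, e2]
  have hmid : c g p = (if f p ∈ Y then 1 else 0) := by
    have e1 : g p = n + 1 := by rw [hg]; rw [if_neg (by omega), if_pos rfl]
    have e2 : g (p + 1) = f p := by
      rw [hg]; rw [if_neg (by omega), if_neg (by omega)]; congr 1 <;> omega
    simp only [hc, e1, e2]
    by_cases hfp : f p ∈ Y
    · rw [if_pos ⟨hX2, hfp⟩, if_pos hfp]
    · rw [if_neg (fun hh => hfp hh.2), if_neg hfp]
  have hhead : ∑ i ∈ range p, c g i + (if 1 ≤ p ∧ f (p-1) ∈ X ∧ f p ∈ Y then 1 else 0)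
      = ∑ i ∈ range p, c f i + (if 1 ≤ p ∧ f (p-1) ∈ X then 1 else 0) := by
    rcases Nat.eq_zero_or_pos p with hp0 | hp1
    · subst hp0; simp
    obtain ⟨q, rfl⟩ : ∃ q, p = q + 1 := ⟨p - 1, by omega⟩
    rw [Finset.sum_range_succ, Finset.sum_range_succ]
    have hsame : ∑ i ∈ range q, c g i = ∑ i ∈ range q, c f i := by
      refine Finset.sum_congr rfl fun i hi => ?_
      rw [mem_range] at hi
      have e1 : g i = f i := by rw [hg]; rw [if_pos (by omega)]
      have e2 : g (i+1) = f (i+1) := by rw [hg]; rw [if_pos (by omega)]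
      simp only [hc, e1, e2]
    have e1 : g q = f q := by rw [hg]; rw [if_pos (by omega)]
    have e2 : g (q+1) = n + 1 := by rw [hg]; rw [if_neg (by omega), if_pos rfl]
    have hcgq : c g q = (if f q ∈ X then 1 else 0) := by
      simp only [hc, e1, e2]
      by_cases hfq : f q ∈ X
      · rw [if_pos ⟨hfq, hY2⟩, if_pos hfq]
      · rw [if_neg (fun hh => hfq hh.1), if_neg hfq]
    have hcfq : c f q = (if 1 ≤ q + 1 ∧ f (q+1-1) ∈ X ∧ f (q+1) ∈ Y then 1 else 0) := by
      simp only [hc, Nat.add_sub_cancel]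
      by_cases h1 : f q ∈ X ∧ f (q+1) ∈ Y
      · rw [if_pos h1, if_pos ⟨by omega, h1⟩]
      · rw [if_neg h1, if_neg (fun hh => h1 hh.2)]
    have hb1 : (if 1 ≤ q + 1 ∧ f (q+1-1) ∈ X then 1 else 0) = (if f q ∈ X then 1 else 0) := by
      simp only [Nat.add_sub_cancel]
      by_cases hfq : f q ∈ X
      · rw [if_pos ⟨by omega, hfq⟩, if_pos hfq]
      · rw [if_neg (fun hh => hfq hh.2), if_neg hfq]
    rw [hsame, hcgq, hcfq, hb1]; ring
  have ha : acount X Y (n+1) g = ∑ i ∈ range (n+1), c g i := acount_eq_sum X Y (n+1) g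
  have hb : acount X Y n f = ∑ i ∈ range n, c f i := acount_eq_sum X Y n f
  rw [ha, hb, hgsplit, hfsplit, htail, hmid]
  omega

lemma cnt_eq (X : Set ℕ) (n : ℕ) :
    cnt X n = ((Finset.Icc 1 n).filter (· ∈ X)).card := by
  rw [cnt, ← Set.ncard_coe_finset]
  congr 1
  ext v
  simp only [Set.mem_inter_iff, Set.mem_Icc, Finset.coe_filter, Finset.mem_Icc,
    Set.mem_setOf_eq]
  tauto

lemma card_vmem (Z : Set ℕ) (n : ℕ) (σ : Equiv.Perm (Fin n)) :
    ((range n).filter (fun j => vmap n σ j ∈ Z)).card = cnt Z n := by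
  rw [cnt_eq]
  refine Finset.card_bij (fun j _ => vmap n σ j) ?_ ?_ ?_
  · intro j hj
    simp only [mem_filter, mem_range] at hj ⊢
    obtain ⟨hjn, hz⟩ := hj
    rw [vmap_lt n σ j hjn] at hz ⊢
    exact ⟨mem_Icc.2 ⟨by omega, by have := (σ ⟨j, hjn⟩).isLt; omega⟩, hz⟩
  · intro a ha b hb hab
    simp only [mem_filter, mem_range] at ha hb
    rw [vmap_lt n σ a ha.1, vmap_lt n σ b hb.1] at hab
    have : σ ⟨a, ha.1⟩ = σ ⟨b, hb.1⟩ := Fin.ext (by omega)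
    have := σ.injective this
    simpa using congrArg Fin.val this
  · intro v hv
    simp only [mem_filter, mem_Icc] at hv
    obtain ⟨⟨h1, h2⟩, hz⟩ := hv
    have hv1 : v - 1 < n := by omega
    have hlt := (σ.symm ⟨v - 1, hv1⟩).isLt
    have hval : vmap n σ ((σ.symm ⟨v - 1, hv1⟩ : ℕ)) = v := by
      rw [vmap_lt n σ _ hlt]
      have : σ ⟨(σ.symm ⟨v - 1, hv1⟩ : ℕ), hlt⟩ = ⟨v - 1, hv1⟩ := by
        convert σ.apply_symm_apply _
      rw [this]
      simp; omega
    refine ⟨(σ.symm ⟨v - 1, hv1⟩ : ℕ), ?_, ?_⟩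
    · simp only [mem_filter, mem_range]
      exact ⟨hlt, by rw [hval]; exact hz⟩
    · exact hval

lemma card_good (X Y : Set ℕ) (hY : 0 ∉ Y) (n : ℕ) (σ : Equiv.Perm (Fin n)) :
    ((range (n+1)).filter
        (fun p => (1 ≤ p ∧ vmap n σ (p-1) ∈ X) ∨ vmap n σ p ∈ Y)).card
      + acount X Y n (vmap n σ) = cnt X n + cnt Y n := by
  set f := vmap n σ with hf
  set A := (range (n+1)).filter (fun p => 1 ≤ p ∧ f (p-1) ∈ X) with hA
  set B := (range (n+1)).filter (fun p => f p ∈ Y) with hB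
  have hunion : (range (n+1)).filter
      (fun p => (1 ≤ p ∧ f (p-1) ∈ X) ∨ f p ∈ Y) = A ∪ B := by
    rw [hA, hB, ← Finset.filter_or]
  have hAcard : A.card = cnt X n := by
    rw [← card_vmem X n σ, ← hf]
    refine Finset.card_bij (fun p _ => p - 1) ?_ ?_ ?_
    · intro p hp
      simp only [hA, mem_filter, mem_range] at hp ⊢
      exact ⟨by omega, hp.2.2⟩
    · intro a ha b hb hab
      simp only [hA, mem_filter, mem_range] at ha hb
      omega
    · intro j hj
      simp only [mem_filter, mem_range] at hj
      exact ⟨j + 1, by simp only [hA, mem_filter, mem_range]; exact ⟨by omega, by omega, by simpa using hj.2⟩, by omega⟩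
  have hBcard : B.card = cnt Y n := by
    rw [← card_vmem Y n σ, ← hf]
    rw [hB]
    congr 1
    ext p
    simp only [mem_filter, mem_range]
    constructor
    · rintro ⟨hp, hy⟩
      refine ⟨?_, hy⟩
      by_contra hc
      rw [hf, vmap_ge n σ p (by omega)] at hy
      exact hY hy
    · rintro ⟨hp, hy⟩; exact ⟨by omega, hy⟩
  have hABcard : (A ∩ B).card = acount X Y n f := by
    rw [hA, hB, ← Finset.filter_and, acount]
    refine Finset.card_bij (fun p _ => p - 1) ?_ ?_ ?_
    · intro p hp
      simp only [mem_filter, mem_range] at hp ⊢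
      obtain ⟨hpn, ⟨hp1, hpx⟩, hpy⟩ := hp
      have hpn' : p - 1 < n := by
        by_contra hc
        rw [hf, vmap_ge n σ p (by omega)] at hpy
        exact hY hpy
      refine ⟨hpn', hpx, ?_⟩
      have : p - 1 + 1 = p := by omega
      rwa [this]
    · intro a ha b hb hab
      simp only [mem_filter, mem_range] at ha hb
      omega
    · intro j hj
      simp only [mem_filter, mem_range] at hj
      obtain ⟨hjn, hjx, hjy⟩ := hj
      exact ⟨j + 1, by
        simp only [mem_filter, mem_range]
        exact ⟨by omega, ⟨by omega, by simpa using hjx⟩, by simpa using hjy⟩, by omega⟩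
  rw [hunion, ← hABcard]
  rw [Finset.card_union_add_card_inter, hAcard, hBcard]

lemma adj_ins (X Y : Set ℕ) (hY : 0 ∉ Y) (n : ℕ) (hX2 : n+1 ∈ X) (hY2 : n+1 ∈ Y)
    (σ : Equiv.Perm (Fin n)) (p : Fin (n+1)) :
    adjCount X Y (n+1) (ins n σ p) = adjCount X Y n σ +
      (if (1 ≤ (p:ℕ) ∧ vmap n σ ((p:ℕ)-1) ∈ X) ∨ vmap n σ (p:ℕ) ∈ Y
        then 1 else 0) := by
  rw [adjCount_eq X Y hY, adjCount_eq X Y hY]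
  have key := acount_insert X Y n (p:ℕ) (by have := p.isLt; omega) (vmap n σ) hX2 hY2
    (vmap (n+1) (ins n σ p)) (vmap_ins n σ p)
  set f := vmap n σ with hf
  by_cases h1 : 1 ≤ (p:ℕ) ∧ f ((p:ℕ)-1) ∈ X <;> by_cases h2 : f (p:ℕ) ∈ Y
  · rw [if_pos ⟨h1.1, h1.2, h2⟩, if_pos h1, if_pos h2] at key
    rw [if_pos (Or.inl h1)]; omega
  · rw [if_neg (fun hh => h2 hh.2.2), if_pos h1, if_neg h2] at key
    rw [if_pos (Or.inl h1)]; omega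
  · rw [if_neg (fun hh => h1 ⟨hh.1, hh.2.1⟩), if_neg h1, if_pos h2] at key
    rw [if_pos (Or.inr h2)]; omega
  · rw [if_neg (fun hh => h1 ⟨hh.1, hh.2.1⟩), if_neg h1, if_neg h2] at key
    rw [if_neg (fun hh => hh.elim h1 h2)]; omega

noncomputable def m1 (X Y : Set ℕ) (n : ℕ) (σ : Equiv.Perm (Fin n)) : ℕ :=
  ((range (n+1)).filter
    (fun q => (1 ≤ q ∧ vmap n σ (q-1) ∈ X) ∨ vmap n σ q ∈ Y)).card

lemma m1_le (X Y : Set ℕ) (n : ℕ) (σ : Equiv.Perm (Fin n)) :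
    m1 X Y n σ ≤ n + 1 := by
  calc m1 X Y n σ ≤ (range (n+1)).card := Finset.card_filter_le _ _
  _ = n + 1 := Finset.card_range _

lemma m1_add (X Y : Set ℕ) (hY : 0 ∉ Y) (n : ℕ) (σ : Equiv.Perm (Fin n)) :
    m1 X Y n σ + adjCount X Y n σ = cnt X n + cnt Y n := by
  rw [m1, adjCount_eq X Y hY]
  exact card_good X Y hY n σ

lemma inner_card (X Y : Set ℕ) (hY : 0 ∉ Y) (n : ℕ) (hX2 : n+1 ∈ X) (hY2 : n+1 ∈ Y)
    (σ : Equiv.Perm (Fin n)) (k : ℕ) :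
    (Finset.filter (fun p : Fin (n+1) => adjCount X Y (n+1) (ins n σ p) = k)
        Finset.univ).card =
      if adjCount X Y n σ = k then (n + 1) - m1 X Y n σ
      else if adjCount X Y n σ + 1 = k then m1 X Y n σ else 0 := by
  set j := adjCount X Y n σ with hj
  set D : ℕ → Prop := fun q => (1 ≤ q ∧ vmap n σ (q-1) ∈ X) ∨ vmap n σ q ∈ Y with hD
  have hrw : Finset.filter (fun p : Fin (n+1) => adjCount X Y (n+1) (ins n σ p) = k)
      Finset.univ
      = Finset.filter (fun p : Fin (n+1) => j + (if D (p:ℕ) then 1 else 0) = k)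
        Finset.univ := by
    refine Finset.filter_congr fun p _ => ?_
    rw [adj_ins X Y hY n hX2 hY2 σ p]
  rw [hrw]
  by_cases hjk : j = k
  · rw [if_pos hjk]
    have hcond : Finset.filter (fun p : Fin (n+1) => j + (if D (p:ℕ) then 1 else 0) = k)
        Finset.univ = Finset.filter (fun p : Fin (n+1) => ¬ D (p:ℕ)) Finset.univ := by
      refine Finset.filter_congr fun p _ => ?_
      by_cases hd : D (p:ℕ)
      · simp only [if_pos hd]
        constructor
        · intro hh; omega
        · intro hh; exact absurd hd hh
      · simp only [if_neg hd]
        constructor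
        · intro _; exact hd
        · intro _; omega
    rw [hcond]
    have := Finset.card_filter_add_card_filter_not
      (s := (Finset.univ : Finset (Fin (n+1)))) (p := fun p => D (p:ℕ))
    have hm : (Finset.filter (fun p : Fin (n+1) => D (p:ℕ)) Finset.univ).card
        = m1 X Y n σ := by
      rw [m1]; exact fin_card_filter_val (n+1) D
    simp only [Finset.card_univ, Fintype.card_fin] at this
    omega
  · rw [if_neg hjk]
    by_cases hjk1 : j + 1 = k
    · rw [if_pos hjk1]
      have hcond : Finset.filter (fun p : Fin (n+1) => j + (if D (p:ℕ) then 1 else 0) = k)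
          Finset.univ = Finset.filter (fun p : Fin (n+1) => D (p:ℕ)) Finset.univ := by
        refine Finset.filter_congr fun p _ => ?_
        by_cases hd : D (p:ℕ)
        · simp only [if_pos hd]
          constructor
          · intro _; exact hd
          · intro _; omega
        · simp only [if_neg hd]
          constructor
          · intro hh; omega
          · intro hh; exact absurd hh hd
      rw [hcond, m1]
      exact fin_card_filter_val (n+1) D
    · rw [if_neg hjk1]
      rw [Finset.card_eq_zero, Finset.filter_eq_empty_iff]
      intro p _
      by_cases hd : D (p:ℕ)
      · simp only [if_pos hd]; omega
      · simp only [if_neg hd]; omega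

lemma A_succ_sum (X Y : Set ℕ) (n k : ℕ) :
    A X Y (n+1) k = ∑ σ : Equiv.Perm (Fin n),
      (Finset.filter (fun p : Fin (n+1) => adjCount X Y (n+1) (ins n σ p) = k)
        Finset.univ).card := by
  rw [A_eq]
  have h2 : ((univ : Finset (Equiv.Perm (Fin (n+1)))).filter
      (fun τ => adjCount X Y (n+1) τ = k)).card
      = ((univ : Finset (Equiv.Perm (Fin n) × Fin (n+1))).filter
        (fun x => adjCount X Y (n+1) (ins n x.1 x.2) = k)).card := by
    refine (Finset.card_bij
      (fun (x : Equiv.Perm (Fin n) × Fin (n+1)) _ => ins n x.1 x.2) ?_ ?_ ?_).symm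
    · intro x hx
      simp only [mem_filter, mem_univ, true_and] at hx ⊢
      exact hx
    · intro a _ b _ hab
      exact ins_injective n hab
    · intro τ hτ
      simp only [mem_filter, mem_univ, true_and] at hτ
      obtain ⟨x, hx⟩ := (ins_bijective n).2 τ
      dsimp only at hx
      refine ⟨x, ?_, hx⟩
      simp only [mem_filter, mem_univ, true_and]
      rw [hx]; exact hτ
  rw [h2, Finset.card_eq_sum_card_fiberwise
    (f := fun x : Equiv.Perm (Fin n) × Fin (n+1) => x.1) (t := univ)
    (fun x _ => mem_univ _)]
  refine Finset.sum_congr rfl fun σ _ => ?_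
  refine Finset.card_bij (fun x _ => x.2) ?_ ?_ ?_
  · intro x hx
    simp only [mem_filter, mem_univ, true_and] at hx ⊢
    rw [← hx.2]; exact hx.1
  · intro a ha b hb hab
    simp only [mem_filter, mem_univ, true_and] at ha hb
    exact Prod.ext (ha.2.trans hb.2.symm) hab
  · intro p hp
    simp only [mem_filter, mem_univ, true_and] at hp
    exact ⟨(σ, p), by simp only [mem_filter, mem_univ, true_and]; exact ⟨hp, trivial⟩, rfl⟩

/-- Recurrence for `A_{n,k}^{X,Y}` when `n+1 ∈ X ∩ Y`:
`A_{n+1,k} = (x_n + y_n - (k-1)) A_{n,k-1} + (n+1 - (x_n + y_n - k)) A_{n,k}`,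
the first term being omitted when `k = 0`. -/
theorem A_rec_case2 (X Y : Set ℕ) (hX : 0 ∉ X) (hY : 0 ∉ Y) (n : ℕ) (hn : 1 ≤ n)
    (h : n + 1 ∈ X ∩ Y) (k : ℕ) :
    (A X Y (n + 1) k : ℤ) =
      (if k = 0 then 0 else
        ((cnt X n : ℤ) + (cnt Y n : ℤ) - ((k : ℤ) - 1)) * (A X Y n (k - 1) : ℤ)) +
        ((n : ℤ) + 1 - ((cnt X n : ℤ) + (cnt Y n : ℤ) - (k : ℤ))) * (A X Y n k : ℤ) := by
  obtain ⟨hX2, hY2⟩ := h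
  set c0 : ℤ := (n : ℤ) + 1 - ((cnt X n : ℤ) + (cnt Y n : ℤ) - (k : ℤ)) with hc0
  set c1 : ℤ := (cnt X n : ℤ) + (cnt Y n : ℤ) - (k : ℤ) + 1 with hc1
  have hterm : ∀ σ : Equiv.Perm (Fin n),
      ((if adjCount X Y n σ = k then (n + 1) - m1 X Y n σ
        else if adjCount X Y n σ + 1 = k then m1 X Y n σ else 0 : ℕ) : ℤ)
      = (if adjCount X Y n σ = k then c0
        else if adjCount X Y n σ + 1 = k then c1 else 0) := by
    intro σ
    have hm := m1_add X Y hY n σ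
    have hle := m1_le X Y n σ
    by_cases h1 : adjCount X Y n σ = k
    · rw [if_pos h1, if_pos h1, hc0]; omega
    · rw [if_neg h1, if_neg h1]
      by_cases h2 : adjCount X Y n σ + 1 = k
      · rw [if_pos h2, if_pos h2, hc1]; omega
      · rw [if_neg h2, if_neg h2]; rfl
  have hmain : (A X Y (n + 1) k : ℤ)
      = ∑ σ : Equiv.Perm (Fin n),
        (if adjCount X Y n σ = k then c0
          else if adjCount X Y n σ + 1 = k then c1 else 0) := by
    rw [A_succ_sum X Y n k]
    push_cast
    rw [Finset.sum_congr rfl fun σ _ => congrArg _ (inner_card X Y hY n hX2 hY2 σ k)]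
    exact Finset.sum_congr rfl fun σ _ => hterm σ
  have hsplit : ∑ σ : Equiv.Perm (Fin n),
      (if adjCount X Y n σ = k then c0
        else if adjCount X Y n σ + 1 = k then c1 else 0)
      = c0 * ((univ : Finset (Equiv.Perm (Fin n))).filter
          (fun σ => adjCount X Y n σ = k)).card
        + c1 * ((univ : Finset (Equiv.Perm (Fin n))).filter
          (fun σ => adjCount X Y n σ + 1 = k)).card := by
    rw [← Finset.sum_filter_add_sum_filter_not univ (fun σ => adjCount X Y n σ = k)]
    have hp1 : ∑ σ ∈ (univ : Finset (Equiv.Perm (Fin n))).filter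
        (fun σ => adjCount X Y n σ = k),
        (if adjCount X Y n σ = k then c0
          else if adjCount X Y n σ + 1 = k then c1 else 0)
        = c0 * ((univ : Finset (Equiv.Perm (Fin n))).filter
            (fun σ => adjCount X Y n σ = k)).card := by
      rw [Finset.sum_congr rfl (fun σ hσ => if_pos (Finset.mem_filter.1 hσ).2),
        Finset.sum_const, nsmul_eq_mul, mul_comm]
    have hp2 : ∑ σ ∈ (univ : Finset (Equiv.Perm (Fin n))).filter
        (fun σ => ¬ adjCount X Y n σ = k),
        (if adjCount X Y n σ = k then c0
          else if adjCount X Y n σ + 1 = k then c1 else 0)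
        = c1 * ((univ : Finset (Equiv.Perm (Fin n))).filter
            (fun σ => adjCount X Y n σ + 1 = k)).card := by
      rw [Finset.sum_congr rfl (fun σ hσ => if_neg (Finset.mem_filter.1 hσ).2)]
      rw [← Finset.sum_filter, Finset.filter_filter]
      have : ((univ : Finset (Equiv.Perm (Fin n))).filter
          (fun σ => ¬ adjCount X Y n σ = k ∧ adjCount X Y n σ + 1 = k))
          = ((univ : Finset (Equiv.Perm (Fin n))).filter
            (fun σ => adjCount X Y n σ + 1 = k)) := by
        refine Finset.filter_congr fun σ _ => ?_
        constructor
        · exact fun hh => hh.2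
        · exact fun hh => ⟨by omega, hh⟩
      rw [this, Finset.sum_const, nsmul_eq_mul, mul_comm]
    rw [hp1, hp2]
  have hPk : (((univ : Finset (Equiv.Perm (Fin n))).filter
      (fun σ => adjCount X Y n σ = k)).card : ℤ) = (A X Y n k : ℤ) := by
    rw [A_eq]
  rw [hmain, hsplit, hPk]
  by_cases hk : k = 0
  · subst hk
    have : ((univ : Finset (Equiv.Perm (Fin n))).filter
        (fun σ => adjCount X Y n σ + 1 = 0)) = ∅ := by
      rw [Finset.filter_eq_empty_iff]; intro σ _; omega
    rw [this]
    simp [hc0]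
  · rw [if_neg hk]
    have hQk : (((univ : Finset (Equiv.Perm (Fin n))).filter
        (fun σ => adjCount X Y n σ + 1 = k)).card : ℤ) = (A X Y n (k-1) : ℤ) := by
      rw [A_eq]
      congr 2
      refine Finset.filter_congr fun σ _ => ?_
      constructor <;> (intro; omega)
    rw [hQk]
    rw [hc1, hc0]
    ring
end

section
/- Let X, Y be subsets of the positive integers and n ≥ 1 an integer with n+1 ∈ X ∩ Y. Then for all k ≥ 0, V_{n+1,k}^{X,Y} = (1 + x_n + y_n − (k−1)) · V_{n,k−1}^{X,Y} + (n+1 − (1 + x_n + y_n − k)) · V_{n,k}^{X,Y}, where the term with V_{n,k−1}^{X,Y} is omitted when k = 0. -/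
/-- `val_{X,Y}(σ)`: number of positions `i ∈ [n]` with `i ∈ X` and `σ_i ∈ Y`
(positions and values of `Fin n` are identified with `{1, ..., n}` via `i ↦ i + 1`). -/
noncomputable def valCount (X Y : Set ℕ) (n : ℕ) (σ : Equiv.Perm (Fin n)) : ℕ :=
  {i : Fin n | ((i : ℕ) + 1) ∈ X ∧ (((σ i : ℕ)) + 1) ∈ Y}.ncard

/-- `V_{n,k}^{X,Y}`: the number of permutations of `[n]` with exactly `k`
`(X,Y)`-place-value pairs. -/
noncomputable def V (X Y : Set ℕ) (n k : ℕ) : ℕ :=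
  Nat.card {σ : Equiv.Perm (Fin n) | valCount X Y n σ = k}

open Finset Equiv

open scoped Classical

lemma valCount_eq_card (X Y : Set ℕ) (n : ℕ) (σ : Equiv.Perm (Fin n)) :
    valCount X Y n σ =
      (Finset.univ.filter fun i : Fin n => ((i : ℕ) + 1) ∈ X ∧ ((σ i : ℕ) + 1) ∈ Y).card := by
  rw [valCount, Set.ncard_eq_toFinset_card', Set.toFinset_setOf]

lemma V_eq_card (X Y : Set ℕ) (n k : ℕ) :
    V X Y n k = (Finset.univ.filter fun σ : Equiv.Perm (Fin n) => valCount X Y n σ = k).card := by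
  rw [V, Nat.card_coe_set_eq, Set.ncard_eq_toFinset_card', Set.toFinset_setOf]

lemma cnt_eq_card (X : Set ℕ) (n : ℕ) :
    cnt X n = (Finset.univ.filter fun i : Fin n => ((i : ℕ) + 1) ∈ X).card := by
  rw [cnt]
  have h1 : X ∩ Set.Icc 1 n = ↑((Finset.Icc 1 n).filter fun m => m ∈ X) := by
    ext m; simp; tauto
  rw [h1, Set.ncard_coe_finset]
  apply Finset.card_bij' (i := fun m hm =>
      (⟨m - 1, by simp [Finset.mem_filter, Finset.mem_Icc] at hm; omega⟩ : Fin n))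
    (j := fun i _ => (i : ℕ) + 1)
  case hi =>
    intro m hm
    simp only [Finset.mem_filter, Finset.mem_Icc, Finset.mem_univ, true_and] at hm ⊢
    have : m - 1 + 1 = m := by omega
    rw [this]; exact hm.2
  case hj =>
    intro i hi
    simp only [Finset.mem_filter, Finset.mem_Icc, Finset.mem_univ, true_and] at hi ⊢
    exact ⟨⟨by omega, by omega⟩, hi⟩
  case left_inv =>
    intro m hm
    simp only [Finset.mem_filter, Finset.mem_Icc] at hm
    show m - 1 + 1 = m
    omega
  case right_inv =>
    intro i hi
    ext
    show (i : ℕ) + 1 - 1 = i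
    omega

noncomputable def extLast {n : ℕ} (τ : Equiv.Perm (Fin n)) : Equiv.Perm (Fin (n + 1)) :=
  Equiv.permCongr finSuccEquivLast.symm τ.optionCongr

lemma extLast_castSucc {n : ℕ} (τ : Equiv.Perm (Fin n)) (j : Fin n) :
    extLast τ (Fin.castSucc j) = Fin.castSucc (τ j) := by
  simp [extLast, Equiv.permCongr_apply]

lemma extLast_last {n : ℕ} (τ : Equiv.Perm (Fin n)) :
    extLast τ (Fin.last n) = Fin.last n := by
  simp [extLast, Equiv.permCongr_apply]

noncomputable def Phi {n : ℕ} (p : Fin (n + 1) × Equiv.Perm (Fin n)) : Equiv.Perm (Fin (n + 1)) :=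
  Equiv.swap (Fin.last n) p.1 * extLast p.2

lemma Phi_last {n : ℕ} (i : Fin (n + 1)) (τ : Equiv.Perm (Fin n)) :
    Phi (i, τ) (Fin.last n) = i := by
  simp [Phi, extLast_last, Equiv.Perm.mul_apply, Equiv.swap_apply_left]

lemma Phi_castSucc {n : ℕ} (i : Fin (n + 1)) (τ : Equiv.Perm (Fin n)) (j : Fin n) :
    Phi (i, τ) (Fin.castSucc j) = Equiv.swap (Fin.last n) i (Fin.castSucc (τ j)) := by
  simp [Phi, extLast_castSucc, Equiv.Perm.mul_apply]

lemma Phi_bijective {n : ℕ} : Function.Bijective (Phi (n := n)) := by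
  rw [Fintype.bijective_iff_injective_and_card]
  constructor
  · rintro ⟨i, τ⟩ ⟨i₂, τ₂⟩ hEq
    have hi : i = i₂ := by
      rw [← Phi_last i τ, ← Phi_last i₂ τ₂, hEq]
    subst hi
    have h2 : extLast τ = extLast τ₂ := mul_left_cancel hEq
    have hτ : τ = τ₂ := by
      ext j
      have h3 : extLast τ (Fin.castSucc j) = extLast τ₂ (Fin.castSucc j) := by rw [h2]
      rw [extLast_castSucc, extLast_castSucc] at h3
      exact congrArg Fin.val (Fin.castSucc_injective n h3)
    rw [hτ]
  · simp [Fintype.card_perm, Nat.factorial_succ]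

lemma val_Phi_last' (X Y : Set ℕ) (n : ℕ) (hXn1 : n + 1 ∈ X) (hYn1 : n + 1 ∈ Y)
    (τ : Equiv.Perm (Fin n)) :
    valCount X Y (n + 1) (Phi (Fin.last n, τ)) = valCount X Y n τ + 1 := by
  rw [valCount_eq_card, valCount_eq_card, Finset.card_filter, Finset.card_filter,
    Fin.sum_univ_castSucc]
  congr 1
  · apply Finset.sum_congr rfl
    intro j _
    rw [Phi_castSucc]
    simp [Equiv.swap_self, Fin.coe_castSucc]
  · rw [Phi_last]
    simp [Fin.val_last, hXn1, hYn1]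

lemma val_Phi_castSucc (X Y : Set ℕ) (n : ℕ) (hXn1 : n + 1 ∈ X) (hYn1 : n + 1 ∈ Y)
    (i' : Fin n) (τ : Equiv.Perm (Fin n)) :
    valCount X Y (n + 1) (Phi (Fin.castSucc i', τ)) =
      valCount X Y n τ +
        (if ((τ.symm i' : ℕ) + 1 ∈ X ∨ (i' : ℕ) + 1 ∈ Y) then 1 else 0) := by
  rw [valCount_eq_card, valCount_eq_card, Finset.card_filter, Finset.card_filter,
    Fin.sum_univ_castSucc]
  have key : ∀ j : Fin n,
      (if (((Fin.castSucc j : Fin (n+1)) : ℕ) + 1 ∈ X ∧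
          ((Phi (Fin.castSucc i', τ) (Fin.castSucc j) : ℕ) + 1 ∈ Y)) then (1:ℕ) else 0)
      = if τ j = i' then (if ((j : ℕ) + 1 ∈ X) then 1 else 0)
        else (if ((j : ℕ) + 1 ∈ X ∧ ((τ j : ℕ) + 1 ∈ Y)) then 1 else 0) := by
    intro j
    rw [Phi_castSucc]
    by_cases hj : τ j = i'
    · rw [hj, Equiv.swap_apply_right]
      simp [hj, Fin.val_last, hYn1]
    · rw [Equiv.swap_apply_of_ne_of_ne (Fin.castSucc_lt_last (τ j)).ne
        (fun hc => hj (Fin.castSucc_injective n hc))]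
      simp [hj]
  simp only [key]
  set j0 := τ.symm i' with hj0
  have hτj0 : τ j0 = i' := τ.apply_symm_apply i'
  rw [← Finset.sum_erase_add Finset.univ _ (Finset.mem_univ j0),
    ← Finset.sum_erase_add Finset.univ
      (fun j : Fin n => if ((j : ℕ) + 1 ∈ X ∧ ((τ j : ℕ) + 1 ∈ Y)) then (1:ℕ) else 0)
      (Finset.mem_univ j0)]
  have herase : ∀ j ∈ Finset.univ.erase j0,
      (if τ j = i' then (if ((j : ℕ) + 1 ∈ X) then (1:ℕ) else 0)
        else (if ((j : ℕ) + 1 ∈ X ∧ ((τ j : ℕ) + 1 ∈ Y)) then 1 else 0))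
      = (if ((j : ℕ) + 1 ∈ X ∧ ((τ j : ℕ) + 1 ∈ Y)) then 1 else 0) := by
    intro j hj
    have hne : j ≠ j0 := Finset.ne_of_mem_erase hj
    have : τ j ≠ i' := fun hc => hne (by rw [← hτj0] at hc; exact τ.injective hc)
    rw [if_neg this]
  rw [Finset.sum_congr rfl herase]
  rw [if_pos hτj0, Phi_last]
  by_cases hx : ((j0 : ℕ) + 1 ∈ X) <;> by_cases hy : ((i' : ℕ) + 1 ∈ Y) <;>
    simp [hx, hy, hτj0, hXn1, hYn1, Fin.val_last]

lemma card_or_add_val (X Y : Set ℕ) (n : ℕ) (τ : Equiv.Perm (Fin n)) :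
    (Finset.univ.filter fun i' : Fin n =>
        ((τ.symm i' : ℕ) + 1 ∈ X ∨ (i' : ℕ) + 1 ∈ Y)).card + valCount X Y n τ =
      cnt X n + cnt Y n := by
  rw [valCount_eq_card, cnt_eq_card X n, cnt_eq_card Y n, Finset.filter_or]
  have h1 : (Finset.univ.filter fun i' : Fin n => ((τ.symm i' : ℕ) + 1 ∈ X)).card =
      (Finset.univ.filter fun j : Fin n => ((j : ℕ) + 1 ∈ X)).card :=
    Finset.card_equiv τ.symm (fun i => by simp)
  have h2 : (Finset.univ.filter fun j : Fin n => ((j : ℕ) + 1 ∈ X ∧ ((τ j : ℕ) + 1 ∈ Y))).card =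
      ((Finset.univ.filter fun i' : Fin n => ((τ.symm i' : ℕ) + 1 ∈ X)) ∩
        (Finset.univ.filter fun i' : Fin n => ((i' : ℕ) + 1 ∈ Y))).card :=
    Finset.card_equiv τ (fun j => by simp)
  have h3 := Finset.card_union_add_card_inter
    (Finset.univ.filter fun i' : Fin n => ((τ.symm i' : ℕ) + 1 ∈ X))
    (Finset.univ.filter fun i' : Fin n => ((i' : ℕ) + 1 ∈ Y))
  omega

/-- Recurrence for `V_{n,k}^{X,Y}` when `n+1 ∈ X ∩ Y`:
`V_{n+1,k} = (1 + x_n + y_n - (k-1)) V_{n,k-1} + (n+1 - (1 + x_n + y_n - k)) V_{n,k}`,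
the first term being omitted when `k = 0`. -/
theorem V_rec_case2 (X Y : Set ℕ) (hX : 0 ∉ X) (hY : 0 ∉ Y) (n : ℕ) (hn : 1 ≤ n)
    (h : n + 1 ∈ X ∩ Y) (k : ℕ) :
    (V X Y (n + 1) k : ℤ) =
      (if k = 0 then 0 else
        (1 + (cnt X n : ℤ) + (cnt Y n : ℤ) - ((k : ℤ) - 1)) * (V X Y n (k - 1) : ℤ)) +
        ((n : ℤ) + 1 - (1 + (cnt X n : ℤ) + (cnt Y n : ℤ) - (k : ℤ))) * (V X Y n k : ℤ) := by
  obtain ⟨hXn1, hYn1⟩ := h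
  -- Step 1: decompose permutations of [n+1] via Phi
  have h1 : (V X Y (n + 1) k : ℤ) = ∑ τ : Equiv.Perm (Fin n), ∑ i : Fin (n + 1),
      (if valCount X Y (n + 1) (Phi (i, τ)) = k then (1 : ℤ) else 0) := by
    have hcard : V X Y (n + 1) k = ∑ p : Fin (n + 1) × Equiv.Perm (Fin n),
        (if valCount X Y (n + 1) (Phi p) = k then (1 : ℕ) else 0) := by
      rw [V_eq_card, ← Finset.card_filter]
      exact (Finset.card_equiv (Equiv.ofBijective Phi Phi_bijective)
        (fun p => by simp)).symm
    rw [hcard]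
    push_cast
    rw [Fintype.sum_prod_type, Finset.sum_comm]
  -- Step 2: compute the inner sum for each τ
  have h2 : ∀ τ : Equiv.Perm (Fin n), ∑ i : Fin (n + 1),
      (if valCount X Y (n + 1) (Phi (i, τ)) = k then (1 : ℤ) else 0) =
      (if valCount X Y n τ + 1 = k then
        (1 + (cnt X n : ℤ) + (cnt Y n : ℤ) - ((k : ℤ) - 1)) else 0) +
      (if valCount X Y n τ = k then
        ((n : ℤ) + 1 - (1 + (cnt X n : ℤ) + (cnt Y n : ℤ) - (k : ℤ))) else 0) := by
    intro τ
    rw [Fin.sum_univ_castSucc]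
    simp only [val_Phi_castSucc X Y n hXn1 hYn1, val_Phi_last' X Y n hXn1 hYn1]
    have hsummand : ∀ i' : Fin n,
        (if valCount X Y n τ +
            (if ((τ.symm i' : ℕ) + 1 ∈ X ∨ (i' : ℕ) + 1 ∈ Y) then 1 else 0) = k
          then (1 : ℤ) else 0) =
        if ((τ.symm i' : ℕ) + 1 ∈ X ∨ (i' : ℕ) + 1 ∈ Y) then
          (if valCount X Y n τ + 1 = k then (1 : ℤ) else 0)
        else (if valCount X Y n τ = k then (1 : ℤ) else 0) := by
      intro i'
      by_cases hc : ((τ.symm i' : ℕ) + 1 ∈ X ∨ (i' : ℕ) + 1 ∈ Y) <;> simp [hc]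
    simp only [hsummand]
    rw [Finset.sum_ite, Finset.sum_const, Finset.sum_const]
    have hB := card_or_add_val X Y n τ
    have hC := Finset.card_filter_add_card_filter_not
      (s := (Finset.univ : Finset (Fin n)))
      (p := fun i' : Fin n => ((τ.symm i' : ℕ) + 1 ∈ X ∨ (i' : ℕ) + 1 ∈ Y))
    simp only [Finset.card_univ, Fintype.card_fin, not_or] at hC
    split_ifs with hk1 hk2 <;> simp [nsmul_eq_mul] <;> push_cast <;> omega
  rw [h1, Finset.sum_congr rfl (fun τ _ => h2 τ), Finset.sum_add_distrib]
  -- Step 3: evaluate the two sums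
  have hs2 : ∑ τ : Equiv.Perm (Fin n), (if valCount X Y n τ = k then
      ((n : ℤ) + 1 - (1 + (cnt X n : ℤ) + (cnt Y n : ℤ) - (k : ℤ))) else 0) =
      ((n : ℤ) + 1 - (1 + (cnt X n : ℤ) + (cnt Y n : ℤ) - (k : ℤ))) * (V X Y n k : ℤ) := by
    rw [← Finset.sum_filter, Finset.sum_const, V_eq_card, nsmul_eq_mul, mul_comm]
  rw [hs2]
  by_cases hk : k = 0
  · subst hk
    simp
  · have hs1 : ∑ τ : Equiv.Perm (Fin n), (if valCount X Y n τ + 1 = k then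
        (1 + (cnt X n : ℤ) + (cnt Y n : ℤ) - ((k : ℤ) - 1)) else 0) =
        (1 + (cnt X n : ℤ) + (cnt Y n : ℤ) - ((k : ℤ) - 1)) * (V X Y n (k - 1) : ℤ) := by
      have heq : (Finset.univ.filter fun τ : Equiv.Perm (Fin n) => valCount X Y n τ + 1 = k) =
          (Finset.univ.filter fun σ : Equiv.Perm (Fin n) => valCount X Y n σ = k - 1) := by
        apply Finset.filter_congr
        intro τ _
        constructor <;> (intro; omega)
      rw [← Finset.sum_filter, heq, Finset.sum_const, V_eq_card, nsmul_eq_mul, mul_comm]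
    rw [hs1, if_neg hk]
end
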